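/- Let k > 0, D > 0 and σ > 0 be real numbers, let I be a nonempty finite index set, let t_i > 0 for i ∈ I be real numbers and set T = Σ_{i∈I} t_i. Let b_v : ℝ → ℝ and b_i : ℝ → ℝ (i ∈ I) be differentiable functions, and define u_v(h) = (T/k)·(exp(b_v(h)·ln(1+k)/(2D)) − 1) and, for each i ∈ I, u_i(h) = (t_i/k)·(exp(b_i(h)·σ·ln(1+k)/(2D)) − 1). Suppose u_v(h) = Σ_{i∈I} u_i(h) for all h ∈ ℝ, and suppose that at a point h₀ all the derivatives b_i'(h₀) for i ∈ I are equal to a common value r. Then r = (1/σ)·b_v'(h₀). -/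

import Mathlib

/-- if all children's dual rates agree, the common rate is `(1/σ)·b_v'` (Lemma 3.3 / 4.3). -/
theorem stmt_3 {ι : Type*} (s : Finset ι) (hs : s.Nonempty)
    (k D σ : ℝ) (hk : 0 < k) (hD : 0 < D) (hσ : 0 < σ)
    (t : ι → ℝ) (ht : ∀ i ∈ s, 0 < t i)
    (T : ℝ) (hT : T = ∑ i ∈ s, t i)
    (bv : ℝ → ℝ) (b : ι → ℝ → ℝ)
    (hbv : Differentiable ℝ bv) (hb : ∀ i ∈ s, Differentiable ℝ (b i))
    (uv : ℝ → ℝ) (u : ι → ℝ → ℝ)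
    (huv : ∀ h : ℝ, uv h = (T / k) * (Real.exp (bv h * Real.log (1 + k) / (2 * D)) - 1))
    (hu : ∀ i ∈ s, ∀ h : ℝ,
      u i h = (t i / k) * (Real.exp (b i h * σ * Real.log (1 + k) / (2 * D)) - 1))
    (hid : ∀ h : ℝ, uv h = ∑ i ∈ s, u i h)
    (h₀ r : ℝ) (hr : ∀ i ∈ s, deriv (b i) h₀ = r) :
    r = (1 / σ) * deriv bv h₀ := by
  have hk' : (0:ℝ) < Real.log (1 + k) := Real.log_pos (by linarith)
  set c : ℝ := Real.log (1 + k) / (2 * D) with hc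
  have hcpos : 0 < c := div_pos hk' (by linarith)
  set B : ℝ := deriv bv h₀ with hB
  -- derivative of uv directly
  have hA : HasDerivAt uv ((T / k) * (Real.exp (bv h₀ * c) * (B * c))) h₀ := by
    have h1 : HasDerivAt (fun h => bv h * c) (B * c) h₀ :=
      (hbv h₀).hasDerivAt.mul_const c
    have h2 := (h1.exp.sub_const 1).const_mul (T / k)
    have : uv = fun h => (T / k) * (Real.exp (bv h * c) - 1) := by
      funext h; rw [huv h, hc]; ring_nf
    rw [this]
    exact h2
  -- derivative of each u i
  have hui : ∀ i ∈ s, HasDerivAt (u i)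
      ((t i / k) * (Real.exp (b i h₀ * σ * c) * (r * σ * c))) h₀ := by
    intro i hi
    have h1 : HasDerivAt (fun h => b i h * σ * c) (r * σ * c) h₀ := by
      have := ((hb i hi h₀).hasDerivAt.mul_const σ).mul_const c
      rwa [hr i hi] at this
    have h2 := (h1.exp.sub_const 1).const_mul (t i / k)
    have : u i = fun h => (t i / k) * (Real.exp (b i h * σ * c) - 1) := by
      funext h; rw [hu i hi h, hc]; ring_nf
    rw [this]
    exact h2
  have hSum : HasDerivAt uv
      (∑ i ∈ s, (t i / k) * (Real.exp (b i h₀ * σ * c) * (r * σ * c))) h₀ := by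
    have h1 : HasDerivAt (fun h => ∑ i ∈ s, u i h)
        (∑ i ∈ s, (t i / k) * (Real.exp (b i h₀ * σ * c) * (r * σ * c))) h₀ :=
      HasDerivAt.fun_sum (fun i hi => hui i hi)
    have : uv = fun h => ∑ i ∈ s, u i h := funext hid
    rw [this]; exact h1
  have hder : (T / k) * (Real.exp (bv h₀ * c) * (B * c))
      = ∑ i ∈ s, (t i / k) * (Real.exp (b i h₀ * σ * c) * (r * σ * c)) :=
    hA.unique hSum
  -- from the identity at h₀: T * exp(bv h₀ * c) = S
  set S : ℝ := ∑ i ∈ s, t i * Real.exp (b i h₀ * σ * c) with hSdef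
  have hSpos : 0 < S := Finset.sum_pos
    (fun i hi => mul_pos (ht i hi) (Real.exp_pos _)) hs
  have hid0 : (T / k) * (Real.exp (bv h₀ * c) - 1)
      = ∑ i ∈ s, (t i / k) * (Real.exp (b i h₀ * σ * c) - 1) := by
    have := hid h₀
    rw [huv h₀] at this
    rw [Finset.sum_congr rfl (fun i hi => hu i hi h₀)] at this
    rw [hc]; convert this using 2 <;> ring_nf
  have hTS : T * Real.exp (bv h₀ * c) = S := by
    have hk0 : (k:ℝ) ≠ 0 := ne_of_gt hk
    have h1 : ∑ i ∈ s, (t i / k) * (Real.exp (b i h₀ * σ * c) - 1)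
        = (S - T) / k := by
      rw [hSdef, hT, ← Finset.sum_sub_distrib, Finset.sum_div]
      exact Finset.sum_congr rfl (fun i hi => by field_simp)
    rw [h1] at hid0
    field_simp at hid0
    linarith
  have hk0 : (k:ℝ) ≠ 0 := ne_of_gt hk
  have hfin : (B = r * σ ∨ c = 0) ∨ S = 0 := by
    have h1 : ∑ i ∈ s, (t i / k) * (Real.exp (b i h₀ * σ * c) * (r * σ * c))
        = (S * (r * σ * c)) / k := by
      rw [hSdef, Finset.sum_mul, Finset.sum_div]
      exact Finset.sum_congr rfl (fun i hi => by field_simp)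
    rw [h1] at hder
    have h2 : (T / k) * (Real.exp (bv h₀ * c) * (B * c))
        = (S * (B * c)) / k := by
      rw [← hTS]; field_simp
    rw [h2] at hder
    field_simp at hder
    exact Or.inl (Or.inl hder)
  rcases hfin with (hBrs | hc0) | hS0
  · rw [hBrs]; field_simp
  · exact absurd hc0 (ne_of_gt hcpos)
  · exact absurd hS0 (ne_of_gt hSpos)
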